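/- For every real ρ > 0 there exists a unique real s > 0 satisfying (1/(2·ln 2)) · e^{1/s} · E₁(1/s) = ρ, where E₁(x) = ∫_1^∞ e^{−t x}/t dt. (This is the unique threshold s⋆ appearing in the outage probability of the optimum relay selection policy under Rayleigh fading.) -/

import Mathlib

open Real MeasureTheory Set Filter

noncomputable def E1h (x : ℝ) : ℝ := ∫ t in Set.Ioi (1:ℝ), Real.exp ((1 - t) * x) / t

lemma E1h_meas (x : ℝ) : Measurable (fun t : ℝ => Real.exp ((1 - t) * x) / t) :=
  (Real.measurable_exp.comp ((measurable_const.sub measurable_id).mul measurable_const)).div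
    measurable_id

lemma integrableOn_exp_aux {x : ℝ} (hx : 0 < x) :
    IntegrableOn (fun t : ℝ => Real.exp ((1 - t) * x)) (Set.Ioi 1) := by
  have h : (fun t : ℝ => Real.exp ((1 - t) * x)) = fun t => Real.exp x * Real.exp (-x * t) := by
    funext t; rw [← Real.exp_add]; ring_nf
  rw [h]
  exact (exp_neg_integrableOn_Ioi 1 hx).const_mul _

lemma integrableOn_E1h {x : ℝ} (hx : 0 < x) :
    IntegrableOn (fun t : ℝ => Real.exp ((1 - t) * x) / t) (Set.Ioi 1) := by
  refine (integrableOn_exp_aux hx).mono' (E1h_meas x).aestronglyMeasurable ?_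
  filter_upwards [ae_restrict_mem measurableSet_Ioi] with t ht
  have h1 : (1:ℝ) < t := ht
  rw [Real.norm_eq_abs, abs_div, abs_of_pos (Real.exp_pos _), abs_of_pos (by linarith)]
  rw [div_le_iff₀ (by linarith)]
  nlinarith [Real.exp_pos ((1 - t) * x)]

lemma E1h_strictAntiOn : StrictAntiOn E1h (Set.Ioi (0:ℝ)) := by
  intro x hx y hy hxy
  have hx0 : (0:ℝ) < x := hx
  have hy0 : (0:ℝ) < y := hy
  have pos : ∀ t : ℝ, 1 < t →
      0 < Real.exp ((1 - t) * x) / t - Real.exp ((1 - t) * y) / t := by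
    intro t h1
    rw [div_sub_div_same]
    apply div_pos _ (by linarith)
    apply sub_pos.2
    apply Real.exp_lt_exp.2
    nlinarith
  have key : 0 < ∫ t in Set.Ioi (1:ℝ),
      (Real.exp ((1 - t) * x) / t - Real.exp ((1 - t) * y) / t) := by
    rw [setIntegral_pos_iff_support_of_nonneg_ae]
    · refine lt_of_lt_of_le (b := volume (Set.Ioi (1:ℝ))) ?_ (measure_mono ?_)
      · simp [Real.volume_Ioi]
      · exact fun t ht => ⟨ne_of_gt (pos t ht), ht⟩
    · filter_upwards [ae_restrict_mem measurableSet_Ioi] with t ht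
      exact (pos t ht).le
    · exact (integrableOn_E1h hx0).sub (integrableOn_E1h hy0)
  have hsub := integral_sub (integrableOn_E1h hx0) (integrableOn_E1h hy0)
  rw [E1h, E1h]
  rw [hsub] at key
  linarith

lemma continuousAt_E1h {x₀ : ℝ} (hx : 0 < x₀) : ContinuousAt E1h x₀ := by
  apply MeasureTheory.continuousAt_of_dominated
    (bound := fun t : ℝ => Real.exp ((1 - t) * (x₀ / 2)))
  · filter_upwards with x
    exact (E1h_meas x).aestronglyMeasurable
  · filter_upwards [Ioi_mem_nhds (half_lt_self hx)] with x hx2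
    filter_upwards [ae_restrict_mem measurableSet_Ioi] with t ht
    have h1 : (1:ℝ) < t := ht
    have hx2' : x₀ / 2 < x := hx2
    have he : Real.exp ((1 - t) * x) ≤ Real.exp ((1 - t) * (x₀ / 2)) := by
      apply Real.exp_le_exp.2
      nlinarith
    rw [Real.norm_eq_abs, abs_div, abs_of_pos (Real.exp_pos _), abs_of_pos (by linarith)]
    calc Real.exp ((1 - t) * x) / t ≤ Real.exp ((1 - t) * x) / 1 := by
          apply div_le_div_of_nonneg_left (Real.exp_pos _).le one_pos h1.le |>.trans_eq rfl
      _ = Real.exp ((1 - t) * x) := div_one _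
      _ ≤ _ := he
  · exact integrableOn_exp_aux (half_pos hx)
  · filter_upwards with t
    exact (Real.continuous_exp.comp (by continuity)).continuousAt.div_const _

lemma E1h_le {x : ℝ} (hx : 0 < x) : E1h x ≤ 1 / x := by
  have h1 : E1h x ≤ ∫ t in Set.Ioi (1:ℝ), Real.exp ((1 - t) * x) := by
    apply setIntegral_mono_on (integrableOn_E1h hx) (integrableOn_exp_aux hx) measurableSet_Ioi
    intro t ht
    have h1t : (1:ℝ) < t := ht
    rw [div_le_iff₀ (by linarith)]
    nlinarith [Real.exp_pos ((1 - t) * x)]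
  have h2 : ∫ t in Set.Ioi (1:ℝ), Real.exp ((1 - t) * x) = 1 / x := by
    have heq : (fun t : ℝ => Real.exp ((1 - t) * x))
        = fun t : ℝ => Real.exp x * Real.exp (-(x * t)) := by
      funext t; rw [← Real.exp_add]; ring_nf
    rw [heq, MeasureTheory.integral_const_mul]
    have hsub : (∫ t in Set.Ioi (1:ℝ), Real.exp (-(x * t)))
        = x⁻¹ • ∫ u in Set.Ioi (x * 1), Real.exp (-u) :=
      integral_comp_mul_left_Ioi (fun u => Real.exp (-u)) 1 hx
    rw [hsub, mul_one, integral_exp_neg_Ioi, smul_eq_mul]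
    have hone : Real.exp x * Real.exp (-x) = 1 := by rw [← Real.exp_add]; simp
    calc Real.exp x * (x⁻¹ * Real.exp (-x)) = Real.exp x * Real.exp (-x) * x⁻¹ := by ring
      _ = 1 * x⁻¹ := by rw [hone]
      _ = 1 / x := by rw [one_mul, one_div]
  rw [← h2]; exact h1

lemma E1h_ge {b : ℝ} (hb : 1 ≤ b) : Real.exp (-1) * Real.log b ≤ E1h (1 / b) := by
  have hb0 : (0:ℝ) < b := by linarith
  have hx : (0:ℝ) < 1 / b := by positivity
  have hIoc : IntegrableOn (fun t : ℝ => Real.exp (-1) / t) (Set.Ioc 1 b) := by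
    apply IntegrableOn.mono_set _ Set.Ioc_subset_Icc_self
    apply ContinuousOn.integrableOn_Icc
    apply ContinuousOn.div continuousOn_const continuousOn_id
    intro t ht
    have : (1:ℝ) ≤ t := ht.1
    exact by positivity
  have step1 : ∫ t in Set.Ioc (1:ℝ) b, Real.exp (-1) / t
      ≤ ∫ t in Set.Ioc (1:ℝ) b, Real.exp ((1 - t) * (1 / b)) / t := by
    apply setIntegral_mono_on hIoc
      ((integrableOn_E1h hx).mono_set Set.Ioc_subset_Ioi_self) measurableSet_Ioc
    intro t ht
    have h1t : (1:ℝ) < t := ht.1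
    have h2t : t ≤ b := ht.2
    gcongr
    rw [show (1 - t) * (1 / b) = (1 - t) / b from by ring, le_div_iff₀ hb0]
    linarith
  have step2 : ∫ t in Set.Ioc (1:ℝ) b, Real.exp ((1 - t) * (1 / b)) / t ≤ E1h (1 / b) := by
    apply setIntegral_mono_set (integrableOn_E1h hx) ?_ Set.Ioc_subset_Ioi_self.eventuallyLE
    filter_upwards [ae_restrict_mem measurableSet_Ioi] with t ht
    have h1t : (1:ℝ) < t := ht
    positivity
  have val : ∫ t in Set.Ioc (1:ℝ) b, Real.exp (-1) / t = Real.exp (-1) * Real.log b := by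
    rw [← intervalIntegral.integral_of_le hb]
    simp_rw [div_eq_mul_inv]
    rw [intervalIntegral.integral_const_mul,
      integral_inv (by rw [Set.uIcc_of_le hb]; intro h0; exact absurd h0.1 (by norm_num)), div_one]
  linarith

lemma exp_mul_E1 (s : ℝ) :
    Real.exp (1 / s) * (∫ t in Set.Ioi (1:ℝ), Real.exp (-(t * (1 / s))) / t) = E1h (1 / s) := by
  rw [E1h, ← MeasureTheory.integral_const_mul]
  congr 1
  funext t
  rw [← mul_div_assoc, ← Real.exp_add]
  congr 2
  ring

/-- Existence and uniqueness of the outage threshold `s⋆`: for every `ρ > 0` there is a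
unique `s > 0` with `(1/(2 ln 2)) e^{1/s} E₁(1/s) = ρ`, where
`E₁(x) = ∫₁^∞ e^{−tx}/t dt`. -/
theorem outage_threshold_exists_unique (ρ : ℝ) (hρ : 0 < ρ) :
    ∃! s : ℝ, 0 < s ∧
      (1 / (2 * Real.log 2)) * Real.exp (1 / s) *
          (∫ t in Set.Ioi (1:ℝ), Real.exp (-(t * (1 / s))) / t) = ρ := by
  have hlog : 0 < Real.log 2 := Real.log_pos one_lt_two
  have hcpos : 0 < 1 / (2 * Real.log 2) := by positivity
  have hrw : ∀ s : ℝ, (1 / (2 * Real.log 2)) * Real.exp (1 / s) *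
      (∫ t in Set.Ioi (1:ℝ), Real.exp (-(t * (1 / s))) / t)
      = (1 / (2 * Real.log 2)) * E1h (1 / s) := fun s => by
    rw [mul_assoc, exp_mul_E1]
  simp only [hrw]
  set g : ℝ → ℝ := fun s => (1 / (2 * Real.log 2)) * E1h (1 / s) with hg
  have hmono : StrictMonoOn g (Set.Ioi (0:ℝ)) := by
    intro a ha b hb hab
    have ha0 : (0:ℝ) < a := ha
    have hb0 : (0:ℝ) < b := hb
    have h1 : 1 / b < 1 / a := one_div_lt_one_div_of_lt ha0 hab
    have := E1h_strictAntiOn (by simp [Set.mem_Ioi]; positivity)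
      (by simp [Set.mem_Ioi]; positivity) h1
    exact mul_lt_mul_of_pos_left this hcpos
  have hcont : ∀ s : ℝ, 0 < s → ContinuousAt g s := by
    intro s hs
    apply ContinuousAt.mul continuousAt_const
    exact (continuousAt_E1h (by positivity)).comp
      (continuousAt_const.div continuousAt_id hs.ne')
  -- choose small a
  set a : ℝ := min (ρ * Real.log 2) 1 with ha
  have ha0 : 0 < a := lt_min (by positivity) one_pos
  have hga : g a < ρ := by
    have h1 : E1h (1 / a) ≤ a := by
      have := E1h_le (x := 1 / a) (by positivity)
      rwa [one_div_one_div] at this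
    have h2 : g a ≤ (1 / (2 * Real.log 2)) * a := mul_le_mul_of_nonneg_left h1 hcpos.le
    have h3 : (1 / (2 * Real.log 2)) * a ≤ (1 / (2 * Real.log 2)) * (ρ * Real.log 2) :=
      mul_le_mul_of_nonneg_left (min_le_left _ _) hcpos.le
    have h4 : (1 / (2 * Real.log 2)) * (ρ * Real.log 2) = ρ / 2 := by
      field_simp
    linarith
  -- choose big b
  set b : ℝ := max (Real.exp ((ρ + 1) * Real.exp 1 * (2 * Real.log 2))) (a + 1) with hb
  have hb1 : 1 ≤ b := le_trans (by linarith) (le_max_right _ _)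
  have hb0 : (0:ℝ) < b := by linarith
  have hab : a < b := lt_of_lt_of_le (by linarith) (le_max_right _ _)
  have hlogb : (ρ + 1) * Real.exp 1 * (2 * Real.log 2) ≤ Real.log b :=
    (Real.le_log_iff_exp_le hb0).2 (le_max_left _ _)
  have hgb : ρ < g b := by
    have h1 : Real.exp (-1) * Real.log b ≤ E1h (1 / b) := E1h_ge hb1
    have h2 : Real.exp (-1) * ((ρ + 1) * Real.exp 1 * (2 * Real.log 2))
        ≤ Real.exp (-1) * Real.log b :=
      mul_le_mul_of_nonneg_left hlogb (Real.exp_pos _).le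
    have h3 : (1 / (2 * Real.log 2)) *
        (Real.exp (-1) * ((ρ + 1) * Real.exp 1 * (2 * Real.log 2))) = ρ + 1 := by
      have he : Real.exp (-1) * Real.exp 1 = 1 := by rw [← Real.exp_add]; norm_num
      have hc2 : (1 / (2 * Real.log 2)) * (2 * Real.log 2) = 1 := by field_simp
      calc (1 / (2 * Real.log 2)) *
          (Real.exp (-1) * ((ρ + 1) * Real.exp 1 * (2 * Real.log 2)))
          = (ρ + 1) * (Real.exp (-1) * Real.exp 1) *
            ((1 / (2 * Real.log 2)) * (2 * Real.log 2)) := by ring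
        _ = ρ + 1 := by rw [he, hc2]; ring
    have h4 : ρ + 1 ≤ g b := by
      rw [← h3]
      exact mul_le_mul_of_nonneg_left (le_trans h2 h1) hcpos.le
    linarith
  have hconts : ContinuousOn g (Set.Icc a b) := fun s hs =>
    (hcont s (lt_of_lt_of_le ha0 hs.1)).continuousWithinAt
  obtain ⟨s, hsmem, hgs⟩ := intermediate_value_Icc hab.le hconts ⟨hga.le, hgb.le⟩
  have hs0 : 0 < s := lt_of_lt_of_le ha0 hsmem.1
  refine ⟨s, ⟨hs0, hgs⟩, ?_⟩
  rintro s' ⟨hs'0, hgs'⟩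
  exact hmono.injOn (Set.mem_Ioi.2 hs'0) (Set.mem_Ioi.2 hs0) (hgs'.trans hgs.symm)
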